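/- Let n ≥ 2 and let μ be an isotropic log-concave probability measure on ℝⁿ whose density is radial of the form f(x) = e^{−g(|x|)}, where g : [0,∞) → ℝ is continuously differentiable and x ↦ g(|x|) is convex on ℝⁿ. Then ∫_{ℝⁿ} g'(|x|) dμ(x) ≤ √(n+1). (Since ∇ψ(x) = g'(|x|)·x/|x| for ψ(x) = g(|x|), this says ∫ |∇ψ| dμ ≤ √(n+1).) -/

import Mathlib

open MeasureTheory Filter Set Metric
open scoped Pointwise ENNReal NNReal Topology RealInnerProductSpace

/-- The Borel measure on `ℝⁿ` with density `f` with respect to Lebesgue measure. -/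
noncomputable def densityMeasure {n : ℕ} (f : EuclideanSpace ℝ (Fin n) → ℝ) :
    Measure (EuclideanSpace ℝ (Fin n)) :=
  (volume : Measure (EuclideanSpace ℝ (Fin n))).withDensity fun x => ENNReal.ofReal (f x)

/-- `f = e^{-ψ}` for a convex `ψ : ℝⁿ → (-∞, ∞]`. -/
def IsLogConcaveFn {n : ℕ} (f : EuclideanSpace ℝ (Fin n) → ℝ) : Prop :=
  (∀ x, 0 ≤ f x) ∧
  ∀ x y : EuclideanSpace ℝ (Fin n), ∀ a b : ℝ, 0 ≤ a → 0 ≤ b → a + b = 1 →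
    f x ^ a * f y ^ b ≤ f (a • x + b • y)

/-- Isotropicity: barycenter at the origin and covariance equal to the identity. -/
def IsIsotropicFn {n : ℕ} (f : EuclideanSpace ℝ (Fin n) → ℝ) : Prop :=
  (∫ x, f x • x = 0) ∧
  ∀ ξ : EuclideanSpace ℝ (Fin n), (∫ x, ⟪x, ξ⟫ ^ 2 * f x) = ‖ξ‖ ^ 2

/-- The `μ`-perimeter `μ⁺(∂A) = liminf_{ε→0⁺} (μ(A + εB₂ⁿ) − μ(A))/ε`. -/
noncomputable def muPerimeter {n : ℕ} (μ : Measure (EuclideanSpace ℝ (Fin n)))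
    (A : Set (EuclideanSpace ℝ (Fin n))) : ℝ :=
  Filter.liminf
    (fun ε : ℝ => ((μ (A + Metric.closedBall 0 ε)).toReal - (μ A).toReal) / ε)
    (nhdsWithin 0 (Set.Ioi 0))

lemma aux_exp_moment (k : ℕ) {l : ℝ} (hl : 0 < l) :
    ∫ t in Ioi (0:ℝ), t ^ k * Real.exp (-(l * t)) = (Nat.factorial k : ℝ) / l ^ (k+1) := by
  have h := Real.integral_rpow_mul_exp_neg_mul_Ioi (a := (k:ℝ)+1) (r := l)
    (by positivity) hl
  rw [show ((k:ℝ)+1) - 1 = (k:ℝ) by ring] at h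
  rw [show (∫ t in Ioi (0:ℝ), t ^ k * Real.exp (-(l * t)))
      = ∫ t in Ioi (0:ℝ), t ^ (k:ℝ) * Real.exp (-(l * t)) from
    setIntegral_congr_fun measurableSet_Ioi (fun t ht => by
      rw [Real.rpow_natCast]), h]
  rw [show ((k:ℝ)+1) = ((k+1 : ℕ):ℝ) by push_cast; ring, Real.rpow_natCast]
  rw [show ((k+1:ℕ):ℝ) = (k:ℝ)+1 by push_cast; ring, Real.Gamma_nat_eq_factorial,
    div_pow, one_pow]
  field_simp

lemma aux_exp_moment_integrable (k : ℕ) {l : ℝ} (hl : 0 < l) :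
    IntegrableOn (fun t => t ^ k * Real.exp (-(l * t))) (Ioi (0:ℝ)) := by
  have h := integrableOn_rpow_mul_exp_neg_mul_rpow (p := 1) (s := (k:ℝ)) (by exact neg_one_lt_zero.trans_le (Nat.cast_nonneg k)) one_pos hl
  refine (h.congr_fun (fun t ht => ?_) measurableSet_Ioi : _)
  beta_reduce
  rw [Real.rpow_natCast, Real.rpow_one, neg_mul]

lemma aux_vanish_step (p : ℕ) (D : ℝ → ℝ) (c s : ℝ) (hs : s = 1 ∨ s = -1) (hc : 0 ≤ c)
    (hip : IntegrableOn (fun t => t ^ p * D t) (Ioi (0:ℝ)))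
    (hiq : IntegrableOn (fun t => t ^ (p+1) * D t) (Ioi (0:ℝ)))
    (hir : IntegrableOn (fun t => t ^ (p+3) * D t) (Ioi (0:ℝ)))
    (hq : ∫ t in Ioi (0:ℝ), t ^ (p+1) * D t = 0)
    (hr : ∫ t in Ioi (0:ℝ), t ^ (p+3) * D t = 0)
    (hF : ∀ t ∈ Ioi (0:ℝ), 0 ≤ s * (t ^ (p+1) * ((t - c) * (t + c)) * D t)) :
    ∫ t in Ioi (0:ℝ), t ^ p * D t ≤ 0 := by
  set G : ℝ → ℝ := fun t => s * (t ^ (p+1) * ((t - c) * (t + c)) * D t) with hG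
  have hGeq : G = fun t => s * ((t ^ (p+3) * D t) - c^2 * (t ^ (p+1) * D t)) := by
    funext t; simp only [hG]; ring
  have hGint : Integrable G ((volume : Measure ℝ).restrict (Ioi 0)) := by
    rw [hGeq]; exact ((hir.sub (hiq.const_mul _)).const_mul _)
  have hGzero : ∫ t in Ioi (0:ℝ), G t = 0 := by
    rw [hGeq]
    rw [integral_const_mul, integral_sub hir (hiq.const_mul _), integral_const_mul, hq, hr]
    ring
  have hGnn : 0 ≤ᵐ[(volume : Measure ℝ).restrict (Ioi 0)] G :=
    (ae_restrict_iff' measurableSet_Ioi).2 (ae_of_all _ hF)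
  have hGae : G =ᵐ[(volume : Measure ℝ).restrict (Ioi 0)] 0 :=
    (integral_eq_zero_iff_of_nonneg_ae hGnn hGint).1 hGzero
  have hnec : ∀ᵐ t ∂((volume : Measure ℝ).restrict (Ioi 0)), t ≠ c := by
    refine ae_iff.mpr ?_
    have h1 : {t : ℝ | ¬ t ≠ c} = {c} := by ext t; simp
    rw [h1]
    exact le_antisymm (le_trans (Measure.restrict_le_self _) (by simp)) zero_le
  have hDae : ∀ᵐ t ∂((volume : Measure ℝ).restrict (Ioi 0)), D t = 0 := by
    filter_upwards [hGae, ae_restrict_mem measurableSet_Ioi, hnec] with t h1 h2 h3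
    have ht : (0:ℝ) < t := h2
    have hs0 : s ≠ 0 := by rcases hs with h | h <;> simp [h]
    have h4 : t ^ (p+1) * ((t - c) * (t + c)) * D t = 0 := by
      have := h1
      simp only [hG, Pi.zero_apply] at this
      exact (mul_eq_zero.1 this).resolve_left hs0
    have h5 : t ^ (p+1) * ((t - c) * (t + c)) ≠ 0 := by
      apply mul_ne_zero (pow_ne_zero _ ht.ne')
      apply mul_ne_zero (sub_ne_zero.2 h3)
      positivity
    exact (mul_eq_zero.1 h4).resolve_left h5
  have : ∫ t in Ioi (0:ℝ), t ^ p * D t = 0 := by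
    rw [integral_congr_ae (g := fun _ => (0:ℝ))
      (by filter_upwards [hDae] with t h; rw [h, mul_zero])]
    simp
  linarith

lemma aux_crossing_core (p : ℕ) (D φ : ℝ → ℝ)
    (hφmin : ∀ s t u : ℝ, 0 ≤ s → s ≤ t → t ≤ u → 0 ≤ φ s → 0 ≤ φ u → 0 ≤ φ t)
    (hsign : ∀ t : ℝ, 0 < t → (0 ≤ φ t → 0 ≤ D t) ∧ (φ t < 0 → D t < 0))
    (hip : IntegrableOn (fun t => t ^ p * D t) (Ioi (0:ℝ)))
    (hiq : IntegrableOn (fun t => t ^ (p+1) * D t) (Ioi (0:ℝ)))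
    (hir : IntegrableOn (fun t => t ^ (p+3) * D t) (Ioi (0:ℝ)))
    (hq : ∫ t in Ioi (0:ℝ), t ^ (p+1) * D t = 0)
    (hr : ∫ t in Ioi (0:ℝ), t ^ (p+3) * D t = 0) :
    ∫ t in Ioi (0:ℝ), t ^ p * D t ≤ 0 := by
  classical
  set K : Set ℝ := {t : ℝ | 0 < t ∧ 0 ≤ φ t} with hK
  have hKpos : ∀ t ∈ K, (0:ℝ) < t := fun t ht => ht.1
  have hbdb : BddBelow K := ⟨0, fun x hx => (hx.1).le⟩
  by_cases hKne : K.Nonempty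
  · set a := sInf K with ha
    have ha0 : 0 ≤ a := le_csInf hKne (fun x hx => hx.1.le)
    have hnotK : ∀ t : ℝ, 0 < t → t ∉ K → D t < 0 := by
      intro t ht htK
      refine (hsign t ht).2 ?_
      by_contra h
      exact htK ⟨ht, not_lt.1 h⟩
    by_cases hBdd : BddAbove K
    · set b := sSup K with hb
      have hab : a ≤ b := csInf_le_csSup hKne hbdb hBdd
      have hb0 : 0 ≤ b := le_trans ha0 hab
      have hDpos : ∀ t : ℝ, a < t → t < b → 0 ≤ D t := by
        intro t h1 h2
        obtain ⟨s, hsK, hst⟩ := exists_lt_of_csInf_lt hKne h1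
        obtain ⟨u, huK, htu⟩ := exists_lt_of_lt_csSup hKne h2
        have ht : (0:ℝ) < t := lt_trans hsK.1 hst
        exact (hsign t ht).1 (hφmin s t u hsK.1.le hst.le htu.le hsK.2 huK.2)
      have hDneglt : ∀ t : ℝ, 0 < t → t < a → D t < 0 := by
        intro t ht hta
        exact hnotK t ht (fun h => absurd (csInf_le hbdb h) (not_le.2 hta))
      have hDneggt : ∀ t : ℝ, 0 < t → b < t → D t < 0 := by
        intro t ht htb
        exact hnotK t ht (fun h => absurd (le_csSup hBdd h) (not_le.2 htb))
      rcases eq_or_lt_of_le ha0 with haz | hapos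
      · -- a = 0 : single downward crossing at b; use s = -1, c = b
        refine aux_vanish_step p D b (-1) (Or.inr rfl) hb0 hip hiq hir hq hr ?_
        intro t ht
        have ht0 : (0:ℝ) < t := ht
        rcases lt_trichotomy t b with h | h | h
        · have hD := hDpos t (haz ▸ ht0) h
          have hψ : (t - b) * (t + b) < 0 :=
            mul_neg_of_neg_of_pos (by linarith) (by linarith)
          have h1 : t ^ (p+1) * ((t - b) * (t + b)) ≤ 0 :=
            mul_nonpos_iff.2 (Or.inl ⟨(pow_pos ht0 (p+1)).le, hψ.le⟩)
          have h2 : t ^ (p+1) * ((t - b) * (t + b)) * D t ≤ 0 :=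
            mul_nonpos_iff.2 (Or.inr ⟨h1, hD⟩)
          linarith
        · simp [h]
        · have hD := hDneggt t ht0 h
          have hψ : 0 < (t - b) * (t + b) :=
            mul_pos (by linarith) (by linarith)
          have h1 : 0 ≤ t ^ (p+1) * ((t - b) * (t + b)) :=
            mul_nonneg (pow_pos ht0 (p+1)).le hψ.le
          have h2 : t ^ (p+1) * ((t - b) * (t + b)) * D t ≤ 0 :=
            mul_nonpos_iff.2 (Or.inl ⟨h1, hD.le⟩)
          linarith
      · -- main case 0 < a ≤ b : cubic
        have key : ∀ t ∈ Ioi (0:ℝ), t ^ p * ((t - a) * (t - b) * (t + a + b)) * D t ≤ 0 := by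
          intro t ht
          have ht0 : (0:ℝ) < t := ht
          have htab : 0 < t + a + b := by linarith
          rcases lt_trichotomy t a with h1 | h1 | h1
          · have hD := hDneglt t ht0 h1
            have hψ : 0 < (t - a) * (t - b) * (t + a + b) := by
              have : 0 < (t - a) * (t - b) := mul_pos_of_neg_of_neg (by linarith) (by linarith)
              exact mul_pos this htab
            have h3 : 0 ≤ t ^ p * ((t - a) * (t - b) * (t + a + b)) :=
              mul_nonneg (pow_pos ht0 p).le hψ.le
            exact mul_nonpos_iff.2 (Or.inl ⟨h3, hD.le⟩)
          · simp [h1]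
          · rcases lt_trichotomy t b with h2 | h2 | h2
            · have hD := hDpos t h1 h2
              have hψ : (t - a) * (t - b) * (t + a + b) ≤ 0 := by
                have h4 : (t - a) * (t - b) ≤ 0 :=
                  mul_nonpos_iff.2 (Or.inl ⟨by linarith, by linarith⟩)
                exact mul_nonpos_iff.2 (Or.inr ⟨h4, htab.le⟩)
              have h3 : t ^ p * ((t - a) * (t - b) * (t + a + b)) ≤ 0 :=
                mul_nonpos_iff.2 (Or.inl ⟨(pow_pos ht0 p).le, hψ⟩)
              exact mul_nonpos_iff.2 (Or.inr ⟨h3, hD⟩)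
            · simp [h2]
            · have hD := hDneggt t ht0 h2
              have hψ : 0 < (t - a) * (t - b) * (t + a + b) := by
                have : 0 < (t - a) * (t - b) := mul_pos (by linarith) (by linarith)
                exact mul_pos this htab
              have h3 : 0 ≤ t ^ p * ((t - a) * (t - b) * (t + a + b)) :=
                mul_nonneg (pow_pos ht0 p).le hψ.le
              exact mul_nonpos_iff.2 (Or.inl ⟨h3, hD.le⟩)
        have hexp : (fun t : ℝ => t ^ p * ((t - a) * (t - b) * (t + a + b)) * D t)
            = fun t => ((t ^ (p+3) * D t) - (a^2 + a*b + b^2) * (t ^ (p+1) * D t))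
              + (a*b*(a+b)) * (t ^ p * D t) := by
          funext t; ring
        have hval : ∫ t in Ioi (0:ℝ), t ^ p * ((t - a) * (t - b) * (t + a + b)) * D t
            = (a*b*(a+b)) * ∫ t in Ioi (0:ℝ), t ^ p * D t := by
          have hf1 : IntegrableOn
              (fun t : ℝ => t ^ (p+3) * D t - (a^2 + a*b + b^2) * (t ^ (p+1) * D t))
              (Ioi (0:ℝ)) := hir.sub (hiq.const_mul _)
          have hf2 : IntegrableOn (fun t : ℝ => (a*b*(a+b)) * (t ^ p * D t)) (Ioi (0:ℝ)) :=
            hip.const_mul _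
          rw [hexp, integral_add hf1 hf2, integral_sub hir (hiq.const_mul _),
            integral_const_mul, integral_const_mul, hq, hr]
          ring
        have hle : ∫ t in Ioi (0:ℝ), t ^ p * ((t - a) * (t - b) * (t + a + b)) * D t ≤ 0 :=
          integral_nonpos_of_ae ((ae_restrict_iff' measurableSet_Ioi).2 (ae_of_all _ key))
        rw [hval] at hle
        have hbpos : 0 < b := lt_of_lt_of_le hapos hab
        have hfac : 0 < a*b*(a+b) := by positivity
        nlinarith
    · -- K unbounded above : single upward crossing at a; s = 1, c = a
      refine aux_vanish_step p D a 1 (Or.inl rfl) ha0 hip hiq hir hq hr ?_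
      intro t ht
      have ht0 : (0:ℝ) < t := ht
      rcases lt_trichotomy t a with h | h | h
      · have hD := hnotK t ht0 (fun hmem => absurd (csInf_le hbdb hmem) (not_le.2 h))
        have hψ : (t - a) * (t + a) < 0 :=
          mul_neg_of_neg_of_pos (by linarith) (by linarith)
        have h1 : t ^ (p+1) * ((t - a) * (t + a)) ≤ 0 :=
          mul_nonpos_iff.2 (Or.inl ⟨(pow_pos ht0 (p+1)).le, hψ.le⟩)
        have h2 : 0 ≤ t ^ (p+1) * ((t - a) * (t + a)) * D t :=
          mul_nonneg_iff.2 (Or.inr ⟨h1, hD.le⟩)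
        linarith
      · simp [h]
      · obtain ⟨s, hsK, hst⟩ := exists_lt_of_csInf_lt hKne h
        obtain ⟨u, huK, htu⟩ := not_bddAbove_iff.1 hBdd t
        have hD : 0 ≤ D t := (hsign t ht0).1
          (hφmin s t u hsK.1.le hst.le htu.le hsK.2 huK.2)
        have hψ : 0 ≤ (t - a) * (t + a) :=
          (mul_pos (by linarith) (by linarith)).le
        have h1 : 0 ≤ t ^ (p+1) * ((t - a) * (t + a)) :=
          mul_nonneg (pow_pos ht0 (p+1)).le hψ
        have h2 : 0 ≤ t ^ (p+1) * ((t - a) * (t + a)) * D t := mul_nonneg h1 hD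
        linarith
  · -- K empty : D < 0 everywhere on Ioi 0 ; s = -1, c = 0
    refine aux_vanish_step p D 0 (-1) (Or.inr rfl) le_rfl hip hiq hir hq hr ?_
    intro t ht
    have ht0 : (0:ℝ) < t := ht
    have hD : D t < 0 := by
      refine (hsign t ht0).2 ?_
      by_contra h
      exact hKne ⟨t, ht0, not_lt.1 h⟩
    have h1 : 0 < t ^ (p+1) * ((t - 0) * (t + 0)) := by
      have : 0 < (t - 0) * (t + 0) := by ring_nf; positivity
      exact mul_pos (pow_pos ht0 (p+1)) this
    have h2 : t ^ (p+1) * ((t - 0) * (t + 0)) * D t ≤ 0 :=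
      mul_nonpos_iff.2 (Or.inl ⟨h1.le, hD.le⟩)
    linarith

lemma aux_borell (m : ℕ) (g : ℝ → ℝ)
    (hgconv : ConvexOn ℝ (Ici (0:ℝ)) g)
    (hip : IntegrableOn (fun t => t ^ m * Real.exp (-g t)) (Ioi (0:ℝ)))
    (hiq : IntegrableOn (fun t => t ^ (m+1) * Real.exp (-g t)) (Ioi (0:ℝ)))
    (hir : IntegrableOn (fun t => t ^ (m+3) * Real.exp (-g t)) (Ioi (0:ℝ)))
    (hQpos : 0 < ∫ t in Ioi (0:ℝ), t ^ (m+1) * Real.exp (-g t))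
    (hQR : ∫ t in Ioi (0:ℝ), t ^ (m+3) * Real.exp (-g t)
      = ((m:ℝ)+2) * ∫ t in Ioi (0:ℝ), t ^ (m+1) * Real.exp (-g t)) :
    ((m:ℝ)+1) * ∫ t in Ioi (0:ℝ), t ^ m * Real.exp (-g t)
      ≤ Real.sqrt ((m:ℝ)+3) * ∫ t in Ioi (0:ℝ), t ^ (m+1) * Real.exp (-g t) := by
  set w : ℝ → ℝ := fun t => Real.exp (-g t) with hw
  set Q : ℝ := ∫ t in Ioi (0:ℝ), t ^ (m+1) * w t with hQ
  set l : ℝ := Real.sqrt ((m:ℝ)+3) with hldef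
  have hl : 0 < l := Real.sqrt_pos.2 (by positivity)
  have hl2 : l^2 = (m:ℝ)+3 := Real.sq_sqrt (by positivity)
  set C0 : ℝ := Q * l^(m+2) / ((m+1).factorial : ℝ) with hC0def
  have hC0 : 0 < C0 := by
    apply div_pos (mul_pos hQpos (pow_pos hl _))
    exact_mod_cast Nat.factorial_pos _
  set c0 : ℝ := Real.log C0 with hc0
  set v : ℝ → ℝ := fun t => Real.exp (c0 - l * t) with hvdef
  have hv : v = fun t => C0 * Real.exp (-(l*t)) := by
    funext t
    simp only [hvdef]
    rw [Real.exp_sub, Real.exp_log hC0, div_eq_mul_inv, ← Real.exp_neg]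
  have hvmom : ∀ k : ℕ, ∫ t in Ioi (0:ℝ), t ^ k * v t
      = C0 * ((Nat.factorial k : ℝ) / l^(k+1)) := by
    intro k
    rw [hv]
    rw [show (fun t : ℝ => t ^ k * (C0 * Real.exp (-(l*t))))
        = fun t : ℝ => C0 * (t ^ k * Real.exp (-(l*t))) from funext fun t => by ring]
    rw [integral_const_mul, aux_exp_moment k hl]
  have hvint : ∀ k : ℕ, IntegrableOn (fun t => t ^ k * v t) (Ioi (0:ℝ)) := by
    intro k
    have h : IntegrableOn (fun t : ℝ => C0 * (t ^ k * Real.exp (-(l*t)))) (Ioi (0:ℝ)) :=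
      (aux_exp_moment_integrable k hl).const_mul C0
    refine h.congr_fun (fun t ht => ?_) measurableSet_Ioi
    simp only [hv]; ring
  set D : ℝ → ℝ := fun t => w t - v t with hD
  have hiD : ∀ k : ℕ, IntegrableOn (fun t => t ^ k * w t) (Ioi (0:ℝ)) →
      IntegrableOn (fun t => t ^ k * D t) (Ioi (0:ℝ)) := by
    intro k hk
    have h : IntegrableOn (fun t : ℝ => t ^ k * w t - t ^ k * v t) (Ioi (0:ℝ)) :=
      hk.sub (hvint k)
    refine h.congr_fun (fun t ht => ?_) measurableSet_Ioi
    simp only [hD]; ring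
  have hQv : ∫ t in Ioi (0:ℝ), t ^ (m+1) * v t = Q := by
    rw [hvmom (m+1), hC0def]
    have h1 : ((m+1).factorial : ℝ) ≠ 0 := by exact_mod_cast (Nat.factorial_pos _).ne'
    have h2 : l ^ (m+2) ≠ 0 := (pow_pos hl _).ne'
    field_simp
  have hfac3 : (((m+3).factorial : ℝ)) = ((m:ℝ)+3)*((m:ℝ)+2)*((m+1).factorial : ℝ) := by
    rw [show m+3 = (m+2)+1 from rfl, Nat.factorial_succ, show m+2 = (m+1)+1 from rfl,
      Nat.factorial_succ]
    push_cast; ring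
  have hRv : ∫ t in Ioi (0:ℝ), t ^ (m+3) * v t = ((m:ℝ)+2) * Q := by
    rw [hvmom (m+3), hC0def, hfac3]
    have h1 : ((m+1).factorial : ℝ) ≠ 0 := by exact_mod_cast (Nat.factorial_pos _).ne'
    have h4 : l ^ (m+3+1) = l^(m+2) * ((m:ℝ)+3) := by
      rw [show m+3+1 = (m+2)+2 from rfl, pow_add, hl2]
    rw [h4]
    have h5 : (m:ℝ)+3 ≠ 0 := by positivity
    have h2 : l ^ (m+2) ≠ 0 := (pow_pos hl _).ne'
    field_simp
  have hq0 : ∫ t in Ioi (0:ℝ), t ^ (m+1) * D t = 0 := by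
    have h := integral_sub hiq (hvint (m+1))
    rw [show (fun t : ℝ => t ^ (m+1) * D t)
        = fun t : ℝ => t ^ (m+1) * w t - t ^ (m+1) * v t from funext fun t => by
          simp only [hD]; ring]
    rw [h, hQv, ← hQ]
    ring
  have hr0 : ∫ t in Ioi (0:ℝ), t ^ (m+3) * D t = 0 := by
    have h := integral_sub hir (hvint (m+3))
    rw [show (fun t : ℝ => t ^ (m+3) * D t)
        = fun t : ℝ => t ^ (m+3) * w t - t ^ (m+3) * v t from funext fun t => by
          simp only [hD]; ring]
    rw [h, hRv, hQR]
    ring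
  set φ : ℝ → ℝ := fun t => l * t - g t - c0 with hφ
  have hsign : ∀ t : ℝ, 0 < t → (0 ≤ φ t → 0 ≤ D t) ∧ (φ t < 0 → D t < 0) := by
    intro t ht
    constructor
    · intro h
      have h2 : Real.exp (c0 - l * t) ≤ Real.exp (-g t) := by
        apply Real.exp_le_exp.2
        simp only [hφ] at h
        linarith
      simp only [hD, hw, hvdef]
      linarith
    · intro h
      have h2 : Real.exp (-g t) < Real.exp (c0 - l * t) := by
        apply Real.exp_lt_exp.2
        simp only [hφ] at h
        linarith
      simp only [hD, hw, hvdef]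
      linarith
  have hφmin : ∀ s t u : ℝ, 0 ≤ s → s ≤ t → t ≤ u → 0 ≤ φ s → 0 ≤ φ u → 0 ≤ φ t := by
    intro s t u hs0 hst htu hφs hφu
    rcases eq_or_lt_of_le (hst.trans htu) with hsu | hsu
    · have hts : t = s := le_antisymm (hsu ▸ htu) hst
      rw [hts]; exact hφs
    · set A : ℝ := (u - t)/(u - s) with hA
      set B : ℝ := (t - s)/(u - s) with hB
      have hus : 0 < u - s := by linarith
      have hA0 : 0 ≤ A := div_nonneg (by linarith) hus.le
      have hB0 : 0 ≤ B := div_nonneg (by linarith) hus.le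
      have hAB : A + B = 1 := by
        rw [hA, hB]; field_simp; ring
      have hABt : A*s + B*u = t := by
        rw [hA, hB]; field_simp; ring
      have hu0 : 0 ≤ u := hs0.trans (hst.trans htu)
      have hg2 := hgconv.2 (mem_Ici.2 hs0) (mem_Ici.2 hu0) hA0 hB0 hAB
      simp only [smul_eq_mul] at hg2
      rw [hABt] at hg2
      have h1 : 0 ≤ A * (l*s - g s - c0) := mul_nonneg hA0 hφs
      have h2 : 0 ≤ B * (l*u - g u - c0) := mul_nonneg hB0 hφu
      have h3 : l*t = A*(l*s) + B*(l*u) := by rw [← hABt]; ring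
      have h4 : A*c0 + B*c0 = c0 := by linear_combination c0 * hAB
      simp only [hφ]
      linarith
  have hcross := aux_crossing_core m D φ hφmin hsign (hiD m hip) (hiD (m+1) hiq)
    (hiD (m+3) hir) hq0 hr0
  have hPv : ∫ t in Ioi (0:ℝ), t ^ m * v t = Q * l / ((m:ℝ)+1) := by
    rw [hvmom m, hC0def]
    have hfac1 : ((m+1).factorial : ℝ) = ((m:ℝ)+1) * (Nat.factorial m : ℝ) := by
      rw [Nat.factorial_succ]; push_cast; ring
    rw [hfac1]
    have h1 : (Nat.factorial m : ℝ) ≠ 0 := by exact_mod_cast (Nat.factorial_pos _).ne'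
    have h5 : (m:ℝ)+1 ≠ 0 := by positivity
    have h6 : l ^ (m+1) ≠ 0 := (pow_pos hl _).ne'
    have h7 : l ^ (m+2) = l ^ (m+1) * l := by rw [pow_succ]
    rw [h7]
    field_simp
  have hsub := integral_sub hip (hvint m)
  rw [show (fun t : ℝ => t ^ m * D t)
      = fun t : ℝ => t ^ m * w t - t ^ m * v t from funext fun t => by
        simp only [hD]; ring, hsub, hPv] at hcross
  have hfin : ∫ t in Ioi (0:ℝ), t ^ m * w t ≤ Q * l / ((m:ℝ)+1) := by linarith
  have h5 : (0:ℝ) < (m:ℝ)+1 := by positivity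
  calc ((m:ℝ)+1) * ∫ t in Ioi (0:ℝ), t ^ m * w t
      ≤ ((m:ℝ)+1) * (Q * l / ((m:ℝ)+1)) := by
        exact mul_le_mul_of_nonneg_left hfin h5.le
    _ = l * Q := by field_simp

lemma aux_ibp (m : ℕ) (g : ℝ → ℝ) (hg : ContDiffOn ℝ 1 g (Set.Ici 0))
    (hdW0 : ∀ r : ℝ, 0 < r → 0 ≤ derivWithin g (Ici 0) r)
    (hip : IntegrableOn (fun t => t ^ m * Real.exp (-g t)) (Ioi (0:ℝ))) :
    IntegrableOn (fun t => t ^ (m+1) * (Real.exp (-g t) * derivWithin g (Ici 0) t))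
      (Ioi (0:ℝ)) ∧
    ∫ t in Ioi (0:ℝ), t ^ (m+1) * (Real.exp (-g t) * derivWithin g (Ici 0) t)
      ≤ ((m:ℝ)+1) * ∫ t in Ioi (0:ℝ), t ^ m * Real.exp (-g t) := by
  set w : ℝ → ℝ := fun t => Real.exp (-g t) with hw
  set dW : ℝ → ℝ := fun r => derivWithin g (Ici 0) r with hdW
  set FF : ℝ → ℝ := fun t => t ^ (m+1) * (w t * dW t) with hFF
  have hgc : ContinuousOn g (Ici 0) := hg.continuousOn
  have hwc : ContinuousOn w (Ici 0) := Real.continuous_exp.comp_continuousOn hgc.neg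
  have hdWc : ContinuousOn dW (Ici 0) :=
    hg.continuousOn_derivWithin (uniqueDiffOn_Ici 0) le_rfl
  have hFFc : ContinuousOn FF (Ici 0) :=
    ((continuous_pow (m+1)).continuousOn).mul (hwc.mul hdWc)
  have hFFnn : ∀ t : ℝ, 0 < t → 0 ≤ FF t := by
    intro t ht
    exact mul_nonneg (pow_nonneg ht.le _) (mul_nonneg (Real.exp_pos _).le (hdW0 t ht))
  have hder : ∀ r : ℝ, 0 < r → HasDerivAt g (dW r) r := by
    intro r hr
    have h1 : ContDiffAt ℝ 1 g r := hg.contDiffAt (Ici_mem_nhds hr)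
    have h2 : DifferentiableAt ℝ g r := h1.differentiableAt one_ne_zero
    have h3 := h2.hasDerivAt
    rwa [← derivWithin_of_mem_nhds (Ici_mem_nhds hr)] at h3
  set M : ℝ := ((m:ℝ)+1) * ∫ t in Ioi (0:ℝ), t ^ m * w t with hM
  have hMnn : 0 ≤ M := by
    apply mul_nonneg (by positivity)
    apply setIntegral_nonneg measurableSet_Ioi
    intro t ht
    exact mul_nonneg (pow_nonneg (le_of_lt ht) _) (Real.exp_pos _).le
  -- partial integrals are bounded by M
  have hIoc : ∀ R : ℝ, 0 < R →
      IntegrableOn FF (Ioc (0:ℝ) R) ∧ ∫ t in Ioc (0:ℝ) R, FF t ≤ M := by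
    intro R hR
    have hIccIci : Icc (0:ℝ) R ⊆ Ici 0 := Icc_subset_Ici_self
    have hFFIoc : IntegrableOn FF (Ioc (0:ℝ) R) :=
      ((hFFc.mono hIccIci).integrableOn_Icc).mono_set Ioc_subset_Icc_self
    refine ⟨hFFIoc, ?_⟩
    set W : ℝ → ℝ := fun r => r ^ (m+1) * w r with hW
    set φc : ℝ → ℝ := fun r => ((m:ℝ)+1) * r ^ m * w r - FF r with hφc
    have hWder : ∀ r ∈ Ioo (0:ℝ) R, HasDerivWithinAt W (φc r) (Ioi r) r := by
      intro r hr
      have h1 : HasDerivAt (fun s : ℝ => s ^ (m+1)) (((m:ℝ)+1) * r ^ m) r := by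
        have := hasDerivAt_pow (m+1) r
        simpa using this
      have h2 : HasDerivAt w (w r * -(dW r)) r := ((hder r hr.1).neg).exp
      have h3 := h1.mul h2
      have h4 : ((m:ℝ)+1) * r ^ m * w r + r ^ (m+1) * (w r * -(dW r)) = φc r := by
        simp only [hφc, hFF]; ring
      rw [h4] at h3
      exact h3.hasDerivWithinAt
    have hWc : ContinuousOn W (Icc 0 R) :=
      (((continuous_pow (m+1)).continuousOn).mul (hwc.mono hIccIci))
    have hφcInt : IntervalIntegrable φc volume 0 R := by
      apply ContinuousOn.intervalIntegrable
      rw [uIcc_of_le hR.le]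
      exact ((((continuous_const.mul (continuous_pow m)).continuousOn).mul
        (hwc.mono hIccIci)).sub (hFFc.mono hIccIci))
    have key := intervalIntegral.integral_eq_sub_of_hasDeriv_right_of_le hR.le hWc hWder hφcInt
    rw [intervalIntegral.integral_of_le hR.le] at key
    have hW0 : W 0 = 0 := by simp [hW]
    have hWR : 0 ≤ W R := mul_nonneg (pow_nonneg hR.le _) (Real.exp_pos _).le
    have hAint : IntegrableOn (fun r : ℝ => ((m:ℝ)+1) * r ^ m * w r) (Ioc (0:ℝ) R) := by
      have h : IntegrableOn (fun t : ℝ => ((m:ℝ)+1) * (t ^ m * w t)) (Ioc (0:ℝ) R) :=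
        (hip.mono_set Ioc_subset_Ioi_self).const_mul ((m:ℝ)+1)
      exact h.congr_fun (fun t ht => by ring) measurableSet_Ioc
    have hsub : ∫ t in Ioc (0:ℝ) R, φc t
        = (∫ t in Ioc (0:ℝ) R, ((m:ℝ)+1) * t ^ m * w t) - ∫ t in Ioc (0:ℝ) R, FF t :=
      integral_sub hAint hFFIoc
    have hmono : ∫ t in Ioc (0:ℝ) R, ((m:ℝ)+1) * t ^ m * w t ≤ M := by
      have h1 : (fun t : ℝ => ((m:ℝ)+1) * t ^ m * w t)
          = fun t : ℝ => ((m:ℝ)+1) * (t ^ m * w t) := funext fun t => by ring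
      rw [h1, integral_const_mul, hM]
      apply mul_le_mul_of_nonneg_left _ (by positivity : (0:ℝ) ≤ (m:ℝ)+1)
      apply setIntegral_mono_set hip
      · refine (ae_restrict_iff' measurableSet_Ioi).2 (ae_of_all _ fun t ht => ?_)
        exact mul_nonneg (pow_nonneg (le_of_lt ht) _) (Real.exp_pos _).le
      · exact HasSubset.Subset.eventuallyLE Ioc_subset_Ioi_self
    rw [hW0] at key
    linarith [key, hsub, hmono, hWR]
  -- monotone convergence
  set μ0 := (volume : Measure ℝ).restrict (Ioi 0) with hμ0
  have hFFaesm : AEStronglyMeasurable FF μ0 :=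
    (hFFc.mono (Ioi_subset_Ici_self)).aestronglyMeasurable measurableSet_Ioi
  have hFFnn_ae : 0 ≤ᵐ[μ0] FF :=
    (ae_restrict_iff' measurableSet_Ioi).2 (ae_of_all _ fun t ht => hFFnn t ht)
  set H : ℕ → ℝ → ℝ≥0∞ := fun k => (Iic ((k:ℝ)+1)).indicator (fun r => ENNReal.ofReal (FF r))
    with hH
  have hHmeas : ∀ k, AEMeasurable (H k) μ0 := by
    intro k
    exact (ENNReal.measurable_ofReal.comp_aemeasurable
      (hFFaesm.aemeasurable)).indicator measurableSet_Iic
  have hHmono : Monotone H := by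
    intro j k hjk r
    simp only [hH]
    by_cases hr : r ∈ Iic ((j:ℝ)+1)
    · have hcast : ((j:ℝ)+1) ≤ ((k:ℝ)+1) := by
        have : (j:ℝ) ≤ (k:ℝ) := Nat.cast_le.2 hjk
        linarith
      rw [indicator_of_mem hr, indicator_of_mem (mem_Iic.2 (le_trans (mem_Iic.1 hr) hcast))]
    · rw [indicator_of_notMem hr]
      exact zero_le
  have hHsup : ∀ r : ℝ, (⨆ k, H k r) = ENNReal.ofReal (FF r) := by
    intro r
    apply le_antisymm
    · apply iSup_le
      intro k
      simp only [hH]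
      by_cases hr : r ∈ Iic ((k:ℝ)+1)
      · rw [indicator_of_mem hr]
      · rw [indicator_of_notMem hr]; exact zero_le
    · obtain ⟨k, hk⟩ := exists_nat_ge r
      refine le_trans ?_ (le_iSup _ k)
      simp only [hH]
      rw [indicator_of_mem (mem_Iic.2 (by linarith))]
  have hlim : ∫⁻ r, ENNReal.ofReal (FF r) ∂μ0 = ⨆ k, ∫⁻ r, H k r ∂μ0 := by
    rw [← lintegral_iSup' hHmeas (ae_of_all _ fun r => fun i j hij => hHmono hij r)]
    congr 1
    funext r
    exact (hHsup r).symm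
  have hHval : ∀ k : ℕ, ∫⁻ r, H k r ∂μ0 ≤ ENNReal.ofReal M := by
    intro k
    rw [hH, lintegral_indicator measurableSet_Iic, hμ0, Measure.restrict_restrict
      measurableSet_Iic]
    rw [show Iic ((k:ℝ)+1) ∩ Ioi 0 = Ioc (0:ℝ) ((k:ℝ)+1) from by
      rw [inter_comm, Ioi_inter_Iic]]
    obtain ⟨hint, hval⟩ := hIoc ((k:ℝ)+1) (by positivity)
    rw [← ofReal_integral_eq_lintegral_ofReal hint
      ((ae_restrict_iff' measurableSet_Ioc).2 (ae_of_all _ fun t ht => hFFnn t ht.1))]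
    exact ENNReal.ofReal_le_ofReal hval
  have hfin : ∫⁻ r, ENNReal.ofReal (FF r) ∂μ0 ≤ ENNReal.ofReal M := by
    rw [hlim]; exact iSup_le hHval
  have hFFint : IntegrableOn FF (Ioi (0:ℝ)) := by
    refine ⟨hFFaesm, ?_⟩
    rw [hasFiniteIntegral_iff_ofReal hFFnn_ae]
    exact lt_of_le_of_lt hfin ENNReal.ofReal_lt_top
  have hFFle : ∫ t in Ioi (0:ℝ), FF t ≤ M := by
    rw [integral_eq_lintegral_of_nonneg_ae hFFnn_ae hFFaesm]
    calc (∫⁻ r, ENNReal.ofReal (FF r) ∂μ0).toReal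
        ≤ (ENNReal.ofReal M).toReal := by
          apply ENNReal.toReal_mono ENNReal.ofReal_ne_top hfin
      _ = M := ENNReal.toReal_ofReal hMnn
  exact ⟨hFFint, hFFle⟩

/-- For a radial isotropic log-concave probability measure on `ℝⁿ`, `n ≥ 2`, with density
`f(x) = e^{−g(|x|)}`, one has `∫ g'(|x|) dμ ≤ √(n+1)`. -/
theorem radial_gradient_bound {n : ℕ} (hn : 2 ≤ n)
    (g : ℝ → ℝ) (hg : ContDiffOn ℝ 1 g (Set.Ici 0))
    (hconv : ConvexOn ℝ Set.univ (fun x : EuclideanSpace ℝ (Fin n) => g ‖x‖))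
    (hiso : IsIsotropicFn (fun x : EuclideanSpace ℝ (Fin n) => Real.exp (-g ‖x‖)))
    (hprob : IsProbabilityMeasure
      (densityMeasure (fun x : EuclideanSpace ℝ (Fin n) => Real.exp (-g ‖x‖)))) :
    (∫ x, deriv g ‖x‖
        ∂(densityMeasure (fun x : EuclideanSpace ℝ (Fin n) => Real.exp (-g ‖x‖)))) ≤
      Real.sqrt (n + 1) := by
  obtain ⟨m, rfl⟩ : ∃ m, n = m + 2 := ⟨n - 2, by omega⟩
  clear hn
  set E := EuclideanSpace ℝ (Fin (m+2)) with hE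
  set f : E → ℝ := fun x => Real.exp (-g ‖x‖) with hf
  set w : ℝ → ℝ := fun r => Real.exp (-g r) with hw
  set μ : Measure E := densityMeasure f with hμ
  have hgc : ContinuousOn g (Ici 0) := hg.continuousOn
  have hwc : ContinuousOn w (Ici 0) := Real.continuous_exp.comp_continuousOn hgc.neg
  have hgnorm : Continuous fun x : E => g ‖x‖ :=
    hgc.comp_continuous continuous_norm (fun x => mem_Ici.2 (norm_nonneg x))
  have hfc : Continuous f := Real.continuous_exp.comp hgnorm.neg
  -- with-density reduction
  have hwd : ∀ h : E → ℝ, ∫ x, h x ∂μ = ∫ x : E, f x * h x := by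
    intro h
    have hmeas : Measurable fun x : E => Real.toNNReal (f x) :=
      (measurable_real_toNNReal.comp hfc.measurable)
    have := integral_withDensity_eq_integral_smul (μ := (volume : Measure E)) hmeas h
    rw [hμ, densityMeasure]
    rw [show (fun x : E => ENNReal.ofReal (f x))
        = fun x : E => ((Real.toNNReal (f x) : ℝ≥0) : ℝ≥0∞) from rfl]
    rw [this]
    congr 1
    funext x
    rw [NNReal.smul_def, Real.coe_toNNReal _ (Real.exp_pos _).le]
    rfl
  -- polar coordinates
  have hpolar : ∀ h : ℝ → ℝ, ∫ x : E, h ‖x‖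
      = ((m:ℝ)+2) * (volume (ball (0:E) 1)).toReal * ∫ r in Ioi (0:ℝ), r ^ (m+1) * h r := by
    intro h
    have hfr : Module.finrank ℝ E = m + 2 := finrank_euclideanSpace_fin
    have := MeasureTheory.integral_fun_norm_addHaar (volume : Measure E) h
    rw [this, hfr]
    rw [show m + 2 - 1 = m + 1 from rfl]
    rw [nsmul_eq_mul, smul_eq_mul]
    simp_rw [smul_eq_mul]
    simp only [measureReal_def]
    push_cast
    ring
  set c : ℝ := ((m:ℝ)+2) * (volume (ball (0:E) 1)).toReal with hc
  set Q : ℝ := ∫ r in Ioi (0:ℝ), r ^ (m+1) * w r with hQ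
  set Rm : ℝ := ∫ r in Ioi (0:ℝ), r ^ (m+3) * w r with hRm
  -- normalization : c * Q = 1
  have hnorm : c * Q = 1 := by
    have h1 : ∫ x, (fun _ : E => (1:ℝ)) x ∂μ = 1 := by
      simp [hμ]
    rw [hwd] at h1
    have h2 : (fun x : E => f x * 1) = fun x : E => (fun r => w r) ‖x‖ := by
      funext x; simp [hf, hw]
    rw [h2, hpolar] at h1
    exact h1
  -- second moment : c * Rm = m + 2
  have hcoordval : ∀ i : Fin (m+2), (∫ x : E, (x i)^2 * f x) = 1 := by
    intro i
    have h := hiso.2 (EuclideanSpace.single i (1:ℝ))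
    simp only [EuclideanSpace.inner_single_right, EuclideanSpace.norm_single,
      norm_one, one_pow, map_one, one_mul, conj_trivial] at h
    exact h
  have hcoordint : ∀ i : Fin (m+2), Integrable (fun x : E => (x i)^2 * f x) := by
    intro i
    by_contra hcon
    have h := hcoordval i
    rw [integral_undef hcon] at h
    exact one_ne_zero h.symm
  have hsecond : c * Rm = (m:ℝ)+2 := by
    have h1 : ∫ x : E, ‖x‖^2 * f x = (m:ℝ)+2 := by
      have h2 : (fun x : E => ‖x‖^2 * f x) = fun x : E => ∑ i, (x i)^2 * f x := by
        funext x
        rw [EuclideanSpace.norm_eq, Real.sq_sqrt (by positivity), ← Finset.sum_mul]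
        simp [Real.norm_eq_abs, sq_abs]
      rw [h2, integral_finset_sum Finset.univ (fun i _ => hcoordint i)]
      simp [hcoordval]
    have h4 := hpolar (fun r : ℝ => r^2 * w r)
    have h5 : ∫ x : E, ‖x‖^2 * f x = ∫ x : E, (fun r : ℝ => r^2 * w r) ‖x‖ := rfl
    rw [h5, h4] at h1
    rw [show (fun r : ℝ => r ^ (m+1) * ((fun r : ℝ => r^2 * w r) r))
        = fun r : ℝ => r ^ (m+3) * w r from funext fun r => by simp only []; ring] at h1
    exact h1
  -- positivity
  have hQnn : 0 ≤ Q := by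
    apply setIntegral_nonneg measurableSet_Ioi
    intro t ht
    exact mul_nonneg (pow_nonneg (le_of_lt ht) _) (Real.exp_pos _).le
  have hcnn : 0 ≤ c := by
    apply mul_nonneg (by positivity)
    exact ENNReal.toReal_nonneg
  have hcpos : 0 < c := by
    rcases eq_or_lt_of_le hcnn with h | h
    · exfalso; rw [← h] at hnorm; simp at hnorm
    · exact h
  have hQpos : 0 < Q := by
    rcases eq_or_lt_of_le hQnn with h | h
    · exfalso; rw [← h] at hnorm; simp at hnorm
    · exact h
  have hQR : Rm = ((m:ℝ)+2) * Q := by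
    have h1 : c * Rm = c * (((m:ℝ)+2) * Q) := by
      rw [hsecond, show c * (((m:ℝ)+2) * Q) = ((m:ℝ)+2) * (c * Q) by ring, hnorm, mul_one]
    exact mul_left_cancel₀ hcpos.ne' h1
  -- integrabilities
  have hiQ : IntegrableOn (fun t => t ^ (m+1) * w t) (Ioi (0:ℝ)) := by
    by_contra hcon
    have h : Q = 0 := by rw [hQ, integral_undef hcon]
    linarith
  have hiR : IntegrableOn (fun t => t ^ (m+3) * w t) (Ioi (0:ℝ)) := by
    by_contra hcon
    have h : Rm = 0 := by rw [hRm, integral_undef hcon]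
    rw [hQR] at h
    nlinarith
  have hiP : IntegrableOn (fun t => t ^ m * w t) (Ioi (0:ℝ)) := by
    rw [show Ioi (0:ℝ) = Ioc 0 1 ∪ Ioi 1 from (Ioc_union_Ioi_eq_Ioi zero_le_one).symm]
    apply IntegrableOn.union
    · exact (((continuous_pow m).continuousOn.mul
        (hwc.mono Icc_subset_Ici_self)).integrableOn_Icc).mono_set Ioc_subset_Icc_self
    · apply Integrable.mono (hiR.mono_set (Ioi_subset_Ioi zero_le_one))
      · exact (((continuous_pow m).continuousOn.mul
          (hwc.mono (fun x (hx : x ∈ Ioi (1:ℝ)) =>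
            mem_Ici.2 (le_trans zero_le_one (le_of_lt hx))))).aestronglyMeasurable
          measurableSet_Ioi)
      · refine (ae_restrict_iff' measurableSet_Ioi).2 (ae_of_all _ fun t ht => ?_)
        have ht1 : (1:ℝ) ≤ t := le_of_lt ht
        have hwnn : 0 ≤ w t := (Real.exp_pos _).le
        rw [Real.norm_eq_abs, Real.norm_eq_abs, abs_of_nonneg (by positivity),
          abs_of_nonneg (by positivity)]
        apply mul_le_mul_of_nonneg_right _ hwnn
        exact pow_le_pow_right₀ ht1 (by omega)
  -- convexity and monotonicity of g on [0, ∞)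
  set u : E := EuclideanSpace.single (0 : Fin (m+2)) (1:ℝ) with hu
  have hnu : ∀ r : ℝ, ‖r • u‖ = |r| := by
    intro r
    rw [norm_smul, hu, EuclideanSpace.norm_single, norm_one, mul_one, Real.norm_eq_abs]
  have hgcx : ConvexOn ℝ (Ici (0:ℝ)) g := by
    refine ⟨convex_Ici 0, ?_⟩
    intro x hx y hy a b ha hb hab
    have h := hconv.2 (mem_univ (x • u)) (mem_univ (y • u)) ha hb hab
    simp only [] at h
    rw [show a • (x • u) + b • (y • u) = (a*x + b*y) • u by
      rw [smul_smul, smul_smul, ← add_smul]] at h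
    rw [hnu, hnu, hnu, abs_of_nonneg (mem_Ici.1 hx), abs_of_nonneg (mem_Ici.1 hy),
      abs_of_nonneg (add_nonneg (mul_nonneg ha (mem_Ici.1 hx))
        (mul_nonneg hb (mem_Ici.1 hy)))] at h
    simpa [smul_eq_mul] using h
  have hmono : MonotoneOn g (Ici (0:ℝ)) := by
    intro s hs t ht hst
    have hs0 : 0 ≤ s := mem_Ici.1 hs
    have ht0 : 0 ≤ t := mem_Ici.1 ht
    rcases eq_or_lt_of_le ht0 with htz | htz
    · have : s = t := le_antisymm hst (htz ▸ hs0)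
      rw [this]
    · set a : ℝ := (t - s)/(2*t) with hA
      set b : ℝ := (t + s)/(2*t) with hB
      have ha : 0 ≤ a := div_nonneg (by linarith) (by linarith)
      have hb : 0 ≤ b := div_nonneg (by linarith) (by linarith)
      have hab : a + b = 1 := by
        rw [hA, hB]; field_simp; ring
      have h := hconv.2 (mem_univ ((-t) • u)) (mem_univ (t • u)) ha hb hab
      simp only [] at h
      rw [show a • ((-t) • u) + b • (t • u) = ((b - a)*t) • u by
        rw [smul_smul, smul_smul, ← add_smul]; congr 1; ring] at h
      have hba : (b - a) * t = s := by
        rw [hA, hB]; field_simp; ring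
      rw [hba, hnu, hnu, hnu, abs_of_nonneg hs0, abs_neg, abs_of_nonneg ht0] at h
      calc g s ≤ a * g t + b * g t := by simpa [smul_eq_mul] using h
        _ = g t := by rw [← add_mul, hab, one_mul]
  -- nonnegativity of the derivative
  have hdW0 : ∀ r : ℝ, 0 < r → 0 ≤ derivWithin g (Ici 0) r := by
    intro r hr
    rw [derivWithin_of_mem_nhds (Ici_mem_nhds hr)]
    have hd : HasDerivAt g (deriv g r) r :=
      ((hg.contDiffAt (Ici_mem_nhds hr)).differentiableAt one_ne_zero).hasDerivAt
    have hslope := hasDerivAt_iff_tendsto_slope.1 hd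
    have h2 : Tendsto (slope g r) (𝓝[>] r) (𝓝 (deriv g r)) :=
      hslope.mono_left (nhdsWithin_mono r (fun x (hx : x ∈ Ioi r) =>
        (ne_of_gt hx : x ≠ r)))
    apply ge_of_tendsto h2
    filter_upwards [self_mem_nhdsWithin] with x hx
    have hx' : r < x := hx
    rw [slope_def_field]
    apply div_nonneg _ (by linarith)
    have := hmono (mem_Ici.2 hr.le) (mem_Ici.2 (le_trans hr.le hx'.le)) hx'.le
    linarith
  -- replace deriv by derivWithin a.e.
  have hae : ∀ᵐ x ∂μ, deriv g ‖x‖ = derivWithin g (Ici 0) ‖x‖ := by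
    have h0 : μ ({(0:E)} : Set E) = 0 := by
      have hv : (volume : Measure E) ({(0:E)} : Set E) = 0 := measure_singleton _
      rw [hμ, densityMeasure]
      exact (withDensity_absolutelyContinuous volume _) hv
    have h1 : ∀ᵐ x ∂μ, x ∉ ({(0:E)} : Set E) := measure_eq_zero_iff_ae_notMem.mp h0
    filter_upwards [h1] with x hx
    have hx0 : x ≠ 0 := by simpa using hx
    have hnx : (0:ℝ) < ‖x‖ := norm_pos_iff.2 hx0
    rw [derivWithin_of_mem_nhds (Ici_mem_nhds hnx)]
  rw [integral_congr_ae hae]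
  rw [hwd (fun x => derivWithin g (Ici 0) ‖x‖)]
  have hpick := hpolar (fun r : ℝ => w r * derivWithin g (Ici 0) r)
  have hgoaleq : (∫ x : E, f x * derivWithin g (Ici 0) ‖x‖)
      = c * ∫ r in Ioi (0:ℝ), r ^ (m+1) * (w r * derivWithin g (Ici 0) r) := hpick
  rw [hgoaleq]
  obtain ⟨hFFint, hFFle⟩ := aux_ibp m g hg hdW0 (by exact hiP)
  have hborell := aux_borell m g hgcx (by exact hiP) (by exact hiQ) (by exact hiR)
    (by exact hQpos) (by exact hQR)
  have hcast : Real.sqrt (((m+2:ℕ):ℝ) + 1) = Real.sqrt ((m:ℝ)+3) := by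
    congr 1; push_cast; ring
  rw [hcast]
  have hQeq : (∫ t in Ioi (0:ℝ), t ^ (m+1) * Real.exp (-g t)) = Q := rfl
  rw [hQeq] at hborell
  have step1 : c * (∫ r in Ioi (0:ℝ), r ^ (m+1) * (w r * derivWithin g (Ici 0) r))
      ≤ c * (((m:ℝ)+1) * ∫ t in Ioi (0:ℝ), t ^ m * Real.exp (-g t)) :=
    mul_le_mul_of_nonneg_left (by exact hFFle) hcnn
  have step2 : c * (((m:ℝ)+1) * ∫ t in Ioi (0:ℝ), t ^ m * Real.exp (-g t))
      ≤ c * (Real.sqrt ((m:ℝ)+3) * Q) :=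
    mul_le_mul_of_nonneg_left hborell hcnn
  have step3 : c * (Real.sqrt ((m:ℝ)+3) * Q) = Real.sqrt ((m:ℝ)+3) := by
    rw [show c * (Real.sqrt ((m:ℝ)+3) * Q) = Real.sqrt ((m:ℝ)+3) * (c * Q) by ring,
      hnorm, mul_one]
  calc c * (∫ r in Ioi (0:ℝ), r ^ (m+1) * (w r * derivWithin g (Ici 0) r))
      ≤ c * (((m:ℝ)+1) * ∫ t in Ioi (0:ℝ), t ^ m * Real.exp (-g t)) := step1
    _ ≤ c * (Real.sqrt ((m:ℝ)+3) * Q) := step2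
    _ = Real.sqrt ((m:ℝ)+3) := step3
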